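/- arXiv:2508.12858 — 3 statements merged into one kernel-verified Lean document; each statement's English description precedes it below -/
import Mathlib

section
/- If U_N is an (α, m, ε)-block encoding of Λ_N^{T1} and U^ρ is a unitary preparing a purification of ρ (U^ρ|0^{r+n}⟩ = |ψ⟩ with Tr_{C^{2^r}}|ψ⟩⟨ψ| = ρ), then (I_m ⊗ U^{ρ†} ⊗ I_k)(U_N ⊗ I_r)(I_m ⊗ U^ρ ⊗ I_k) is an (α, m+r+n, ε)-block encoding of N(ρ). -/
open Matrix MeasureTheory
open scoped Kronecker ComplexOrder

/-- Operator (spectral) norm of a complex matrix. -/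
noncomputable def opNorm {m n : Type*} [Fintype m] [Fintype n] [DecidableEq n]
    (A : Matrix m n ℂ) : ℝ :=
  ‖(Matrix.toEuclideanLin A).toContinuousLinearMap‖

/-- Choi matrix `Λ_N = Σ_{ij} |i⟩⟨j| ⊗ N(|i⟩⟨j|)`. -/
noncomputable def choi {ι κ : Type*} [Fintype ι] [DecidableEq ι]
    (N : Matrix ι ι ℂ →ₗ[ℂ] Matrix κ κ ℂ) : Matrix (ι × κ) (ι × κ) ℂ :=
  fun p q => N (Matrix.single p.1 q.1 1) p.2 q.2

/-- Partial transpose on the first tensor factor. -/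
def ptrans1 {ι κ : Type*} (M : Matrix (ι × κ) (ι × κ) ℂ) : Matrix (ι × κ) (ι × κ) ℂ :=
  fun p q => M (q.1, p.2) (p.1, q.2)

/-- Partially transposed Choi matrix `Λ_N^{T1}`. -/
noncomputable def choiT1 {ι κ : Type*} [Fintype ι] [DecidableEq ι]
    (N : Matrix ι ι ℂ →ₗ[ℂ] Matrix κ κ ℂ) : Matrix (ι × κ) (ι × κ) ℂ :=
  ptrans1 (choi N)

/-- The swap operator `S(u ⊗ v) = v ⊗ u` as a matrix. -/
def swapOp (ι : Type*) [DecidableEq ι] : Matrix (ι × ι) (ι × ι) ℂ :=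
  fun p q => if p.1 = q.2 ∧ p.2 = q.1 then 1 else 0

open scoped Matrix.Norms.L2Operator

lemma opNorm_eq_l2norm {m n : Type*} [Fintype m] [Fintype n] [DecidableEq n]
    (A : Matrix m n ℂ) : opNorm A = ‖A‖ := rfl

lemma l2norm_one_matrix (k : ℕ) : ‖(1 : Matrix (Fin (2^k)) (Fin (2^k)) ℂ)‖ = 1 := by
  rw [Matrix.cstar_norm_def, _root_.map_one]
  exact ContinuousLinearMap.norm_id

lemma aux_V {m r n k : ℕ}
    (UN : Matrix (Fin (2 ^ m) × Fin (2 ^ n) × Fin (2 ^ k))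
        (Fin (2 ^ m) × Fin (2 ^ n) × Fin (2 ^ k)) ℂ)
    (Uρ : Matrix (Fin (2 ^ r) × Fin (2 ^ n)) (Fin (2 ^ r) × Fin (2 ^ n)) ℂ)
    (A B C V : Matrix (Fin (2 ^ m) × Fin (2 ^ r) × Fin (2 ^ n) × Fin (2 ^ k))
        (Fin (2 ^ m) × Fin (2 ^ r) × Fin (2 ^ n) × Fin (2 ^ k)) ℂ)
    (hA : ∀ p q, A p q = if p.1 = q.1 ∧ p.2.2.2 = q.2.2.2 then
        Uρᴴ (p.2.1, p.2.2.1) (q.2.1, q.2.2.1) else 0)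
    (hB : ∀ p q, B p q = if p.2.1 = q.2.1 then
        UN (p.1, p.2.2.1, p.2.2.2) (q.1, q.2.2.1, q.2.2.2) else 0)
    (hC : ∀ p q, C p q = if p.1 = q.1 ∧ p.2.2.2 = q.2.2.2 then
        Uρ (p.2.1, p.2.2.1) (q.2.1, q.2.2.1) else 0)
    (hV : V = A * B * C) (x y : Fin (2^k)) :
    V (0,0,0,x) (0,0,0,y) = ∑ a : Fin (2^r), ∑ i : Fin (2^n), ∑ j : Fin (2^n),
      star (Uρ (a, i) (0, 0)) * UN (0, i, x) (0, j, y) * Uρ (a, j) (0, 0) := by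
  subst hV
  simp only [Matrix.mul_apply, hA, hB, hC, conjTranspose_apply, Fintype.sum_prod_type]
  simp [Finset.mul_sum, Finset.sum_mul, ite_and, apply_ite star, mul_ite, ite_mul,
    Finset.sum_ite_eq, Finset.sum_ite_eq']
  refine Finset.sum_congr rfl fun a _ => ?_
  rw [Finset.sum_comm]

lemma aux_Nρ {n k : ℕ}
    (N : Matrix (Fin (2 ^ n)) (Fin (2 ^ n)) ℂ →ₗ[ℂ] Matrix (Fin (2 ^ k)) (Fin (2 ^ k)) ℂ)
    (ρ : Matrix (Fin (2 ^ n)) (Fin (2 ^ n)) ℂ) (x y : Fin (2^k)) :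
    N ρ x y = ∑ i : Fin (2^n), ∑ j : Fin (2^n),
      ρ j i * N (Matrix.single j i 1) x y := by
  conv_lhs => rw [matrix_eq_sum_single ρ]
  rw [map_sum, Finset.sum_comm]
  simp only [Matrix.sum_apply]
  refine Finset.sum_congr rfl fun i _ => ?_
  rw [map_sum, Matrix.sum_apply]
  refine Finset.sum_congr rfl fun j _ => ?_
  have h1 : Matrix.single i j (ρ i j) = ρ i j • Matrix.single i j (1:ℂ) := by
    rw [Matrix.smul_single, smul_eq_mul, mul_one]
  rw [h1, _root_.map_smul, Matrix.smul_apply, smul_eq_mul]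

lemma aux_KDK {r n k : ℕ}
    (U : Fin (2^r) → Fin (2^n) → ℂ)
    (D : Matrix (Fin (2^n) × Fin (2^k)) (Fin (2^n) × Fin (2^k)) ℂ)
    (a : Fin (2^r)) (x y : Fin (2^k)) :
    ((Matrix.of (fun (p : Fin (2^n) × Fin (2^k)) (z : Fin (2^k)) =>
        U a p.1 * (if p.2 = z then (1:ℂ) else 0)))ᴴ * D *
     (Matrix.of (fun (p : Fin (2^n) × Fin (2^k)) (z : Fin (2^k)) =>
        U a p.1 * (if p.2 = z then (1:ℂ) else 0)))) x y =
      ∑ i : Fin (2^n), ∑ j : Fin (2^n),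
        star (U a i) * D (i, x) (j, y) * U a j := by
  simp only [Matrix.mul_apply, conjTranspose_apply, Matrix.of_apply,
    Fintype.sum_prod_type, star_mul', star_one, star_zero, apply_ite star]
  simp [Finset.mul_sum, Finset.sum_mul, mul_ite, ite_mul, Finset.sum_ite_eq,
    Finset.sum_ite_eq', mul_comm, mul_assoc, mul_left_comm]
  rw [Finset.sum_comm]

lemma aux_KK {r n k : ℕ}
    (U : Fin (2^r) → Fin (2^n) → ℂ) (a : Fin (2^r)) :
    ((Matrix.of (fun (p : Fin (2^n) × Fin (2^k)) (z : Fin (2^k)) =>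
        U a p.1 * (if p.2 = z then (1:ℂ) else 0)))ᴴ *
     (Matrix.of (fun (p : Fin (2^n) × Fin (2^k)) (z : Fin (2^k)) =>
        U a p.1 * (if p.2 = z then (1:ℂ) else 0)))) =
      ((∑ i : Fin (2^n), Complex.normSq (U a i) : ℝ) : ℂ) •
        (1 : Matrix (Fin (2^k)) (Fin (2^k)) ℂ) := by
  ext x y
  simp only [Matrix.mul_apply, conjTranspose_apply, Matrix.of_apply,
    Fintype.sum_prod_type, star_mul', star_one, star_zero, apply_ite star,
    Matrix.smul_apply, Matrix.one_apply]
  rcases eq_or_ne x y with h | h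
  · subst h
    simp [mul_ite, ite_mul, Finset.sum_ite_eq', mul_comm]
    refine Finset.sum_congr rfl fun i _ => ?_
    rw [Complex.normSq_eq_conj_mul_self]
    ring
  · rw [if_neg h]
    simp only [smul_zero]
    rw [Finset.sum_eq_zero]
    intro i _
    rw [Finset.sum_eq_zero]
    intro z _
    by_cases hz : z = x <;> by_cases hz' : z = y <;> simp_all

lemma aux_sum {σ ι : Type*} [Fintype σ] [Fintype ι]
    (u : σ → ι → ℂ) (ρ : ι → ι → ℂ)
    (hρ : ∀ i j, ρ i j = ∑ a : σ, u a i * star (u a j))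
    (F G : ι → ι → ℂ) (α : ℂ) :
    (∑ i : ι, ∑ j : ι, ρ j i * F i j) -
      α * ∑ a : σ, ∑ i : ι, ∑ j : ι, star (u a i) * G i j * u a j
    = ∑ a : σ, ∑ i : ι, ∑ j : ι, star (u a i) * (F i j - α * G i j) * u a j := by
  have h1 : ∀ a i j, star (u a i) * (F i j - α * G i j) * u a j
      = star (u a i) * F i j * u a j - α * (star (u a i) * G i j * u a j) := by
    intro a i j; ring
  simp only [h1]
  simp only [Finset.sum_sub_distrib]
  simp only [Finset.mul_sum]
  congr 1
  symm
  rw [Finset.sum_comm]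
  refine Finset.sum_congr rfl fun i _ => ?_
  rw [Finset.sum_comm]
  refine Finset.sum_congr rfl fun j _ => ?_
  rw [hρ j i, Finset.sum_mul]
  refine Finset.sum_congr rfl fun a _ => ?_
  ring

/-- BELT: if `U_N` is an `(α,m,ε)`-block encoding of `Λ_N^{T1}` and `U^ρ`
prepares a purification of `ρ` from `|0^{r+n}⟩`, then the circuit
`(I_m ⊗ U^{ρ†} ⊗ I_k)(U_N ⊗ I_r)(I_m ⊗ U^ρ ⊗ I_k)` is an `(α, m+r+n, ε)`-block
encoding of `N(ρ)`.  Register order: ancilla (m), purifying (r), input (n), output (k). -/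
theorem belt_main {m r n k : ℕ} (α ε : ℝ) (hα : 0 ≤ α) (hε : 0 ≤ ε)
    (N : Matrix (Fin (2 ^ n)) (Fin (2 ^ n)) ℂ →ₗ[ℂ] Matrix (Fin (2 ^ k)) (Fin (2 ^ k)) ℂ)
    (UN : Matrix (Fin (2 ^ m) × Fin (2 ^ n) × Fin (2 ^ k))
        (Fin (2 ^ m) × Fin (2 ^ n) × Fin (2 ^ k)) ℂ)
    (hUN : UN ∈ Matrix.unitaryGroup (Fin (2 ^ m) × Fin (2 ^ n) × Fin (2 ^ k)) ℂ)
    (hBE : opNorm (choiT1 N - α •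
        Matrix.of (fun p q : Fin (2 ^ n) × Fin (2 ^ k) => UN (0, p) (0, q))) ≤ ε)
    (Uρ : Matrix (Fin (2 ^ r) × Fin (2 ^ n)) (Fin (2 ^ r) × Fin (2 ^ n)) ℂ)
    (hUρ : Uρ ∈ Matrix.unitaryGroup (Fin (2 ^ r) × Fin (2 ^ n)) ℂ)
    (ρ : Matrix (Fin (2 ^ n)) (Fin (2 ^ n)) ℂ)
    -- `ψ = U^ρ |0^{r+n}⟩` purifies `ρ`:
    (hρ : ∀ i j, ρ i j = ∑ a : Fin (2 ^ r), Uρ (a, i) (0, 0) * star (Uρ (a, j) (0, 0)))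
    (A B C V : Matrix (Fin (2 ^ m) × Fin (2 ^ r) × Fin (2 ^ n) × Fin (2 ^ k))
        (Fin (2 ^ m) × Fin (2 ^ r) × Fin (2 ^ n) × Fin (2 ^ k)) ℂ)
    -- `A = I_m ⊗ U^{ρ†} ⊗ I_k`
    (hA : ∀ p q, A p q = if p.1 = q.1 ∧ p.2.2.2 = q.2.2.2 then
        Uρᴴ (p.2.1, p.2.2.1) (q.2.1, q.2.2.1) else 0)
    -- `B = U_N ⊗ I_r` (with `U_N` acting on the `m`, `n`, `k` registers)
    (hB : ∀ p q, B p q = if p.2.1 = q.2.1 then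
        UN (p.1, p.2.2.1, p.2.2.2) (q.1, q.2.2.1, q.2.2.2) else 0)
    -- `C = I_m ⊗ U^ρ ⊗ I_k`
    (hC : ∀ p q, C p q = if p.1 = q.1 ∧ p.2.2.2 = q.2.2.2 then
        Uρ (p.2.1, p.2.2.1) (q.2.1, q.2.2.1) else 0)
    (hV : V = A * B * C) :
    opNorm (N ρ - α •
        Matrix.of (fun x y : Fin (2 ^ k) => V (0, 0, 0, x) (0, 0, 0, y))) ≤ ε := by
  classical
  set u : Fin (2^r) → Fin (2^n) → ℂ := fun a i => Uρ (a, i) (0, 0) with hu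
  set K : Fin (2^r) → Matrix (Fin (2^n) × Fin (2^k)) (Fin (2^k)) ℂ :=
    fun a => Matrix.of (fun (p : Fin (2^n) × Fin (2^k)) (z : Fin (2^k)) =>
      u a p.1 * (if p.2 = z then (1:ℂ) else 0)) with hKdef
  set D : Matrix (Fin (2^n) × Fin (2^k)) (Fin (2^n) × Fin (2^k)) ℂ :=
    choiT1 N - α • Matrix.of (fun p q : Fin (2 ^ n) × Fin (2 ^ k) => UN (0, p) (0, q))
    with hDdef
  -- key matrix identity
  have key : N ρ - α • Matrix.of (fun x y : Fin (2^k) => V (0,0,0,x) (0,0,0,y)) =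
      ∑ a : Fin (2^r), (K a)ᴴ * D * (K a) := by
    ext x y
    rw [Matrix.sub_apply, Matrix.smul_apply, Matrix.of_apply, Matrix.sum_apply]
    have h2 : ∀ a : Fin (2^r), ((K a)ᴴ * D * (K a)) x y =
        ∑ i : Fin (2^n), ∑ j : Fin (2^n),
          star (u a i) * D (i, x) (j, y) * u a j := fun a => aux_KDK u D a x y
    simp only [h2]
    have hDentry : ∀ (i j : Fin (2^n)), D (i, x) (j, y) =
        N (Matrix.single j i 1) x y - (α : ℂ) * UN (0, i, x) (0, j, y) := by
      intro i j
      rw [hDdef, Matrix.sub_apply, Matrix.smul_apply, Matrix.of_apply, Complex.real_smul]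
      rfl
    simp only [hDentry]
    rw [aux_Nρ N ρ x y, aux_V UN Uρ A B C V hA hB hC hV x y, Complex.real_smul]
    exact aux_sum u (fun i j => ρ i j) (fun i j => hρ i j)
      (fun i j => N (Matrix.single j i 1) x y)
      (fun i j => UN (0, i, x) (0, j, y)) (α : ℂ)
  -- column of a unitary has unit norm
  have hcol : ∑ a : Fin (2^r), ∑ i : Fin (2^n), Complex.normSq (u a i) = 1 := by
    have h1 : (Uρᴴ * Uρ) ((0 : Fin (2^r)), (0 : Fin (2^n))) (0, 0) = 1 := by
      have := Matrix.mem_unitaryGroup_iff'.mp hUρ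
      rw [Matrix.star_eq_conjTranspose] at this
      rw [this]
      simp [Matrix.one_apply]
    rw [Matrix.mul_apply, Fintype.sum_prod_type] at h1
    have h2 : ∑ a : Fin (2^r), ∑ i : Fin (2^n),
        ((Complex.normSq (u a i) : ℂ)) = 1 := by
      rw [← h1]
      refine Finset.sum_congr rfl fun a _ => Finset.sum_congr rfl fun i _ => ?_
      rw [conjTranspose_apply, Complex.star_def, ← Complex.normSq_eq_conj_mul_self]
    exact_mod_cast h2
  set c : Fin (2^r) → ℝ := fun a => ∑ i : Fin (2^n), Complex.normSq (u a i) with hc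
  have hcnn : ∀ a, 0 ≤ c a := fun a =>
    Finset.sum_nonneg fun i _ => Complex.normSq_nonneg _
  have hKnorm : ∀ a, ‖K a‖ * ‖K a‖ = c a := by
    intro a
    rw [← Matrix.l2_opNorm_conjTranspose_mul_self, hKdef]
    rw [aux_KK u a, norm_smul, l2norm_one_matrix]
    rw [Complex.norm_real]
    rw [Real.norm_eq_abs, abs_of_nonneg (hcnn a), mul_one]
  have hterm : ∀ a : Fin (2^r), ‖(K a)ᴴ * D * (K a)‖ ≤ c a * ‖D‖ := by
    intro a
    calc ‖(K a)ᴴ * D * (K a)‖ ≤ ‖(K a)ᴴ * D‖ * ‖K a‖ := Matrix.l2_opNorm_mul _ _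
      _ ≤ (‖(K a)ᴴ‖ * ‖D‖) * ‖K a‖ :=
          mul_le_mul_of_nonneg_right (Matrix.l2_opNorm_mul _ _) (norm_nonneg _)
      _ = c a * ‖D‖ := by
          rw [Matrix.l2_opNorm_conjTranspose]
          rw [show ‖K a‖ * ‖D‖ * ‖K a‖ = (‖K a‖ * ‖K a‖) * ‖D‖ by ring, hKnorm a]
  have hDε : ‖D‖ ≤ ε := hBE
  calc opNorm (N ρ - α • Matrix.of (fun x y : Fin (2^k) => V (0,0,0,x) (0,0,0,y)))
      = ‖∑ a : Fin (2^r), (K a)ᴴ * D * (K a)‖ := by rw [opNorm_eq_l2norm, key]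
    _ ≤ ∑ a : Fin (2^r), ‖(K a)ᴴ * D * (K a)‖ := norm_sum_le _ _
    _ ≤ ∑ a : Fin (2^r), c a * ‖D‖ := Finset.sum_le_sum fun a _ => hterm a
    _ = (∑ a : Fin (2^r), c a) * ‖D‖ := by rw [Finset.sum_mul]
    _ = ‖D‖ := by rw [hc]; rw [show (∑ a : Fin (2^r), ∑ i : Fin (2^n),
          Complex.normSq (u a i)) = 1 from hcol]; ring
    _ ≤ ε := hDε
end

section
/- For any pure state ψ = |ψ⟩⟨ψ| on C^{d_A} ⊗ C^{d_B}, one has |Tr[((R⊗I)(ψ)) ψ ((R⊗I)(ψ))] − 1| ≤ 2‖Tr_A(ψ)‖_∞, where R(X) = Tr(X)I − X and Tr_A denotes the partial trace over the first factor. -/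
open Matrix MeasureTheory
open scoped Kronecker ComplexOrder

/-- Auxiliary: trace of a power of a Hermitian matrix is the sum of powers of eigenvalues. -/
lemma trace_pow_eq_aux {n : Type*} [Fintype n] [DecidableEq n] {A : Matrix n n ℂ}
    (hA : A.IsHermitian) (k : ℕ) :
    (A ^ k).trace = ((∑ i, hA.eigenvalues i ^ k : ℝ) : ℂ) := by
  set U : Matrix n n ℂ := (hA.eigenvectorUnitary : Matrix n n ℂ)
  set D : Matrix n n ℂ := diagonal (RCLike.ofReal ∘ hA.eigenvalues)
  have hsU : star U * U = 1 := Unitary.coe_star_mul_self hA.eigenvectorUnitary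
  have hUs : U * star U = 1 := Unitary.coe_mul_star_self hA.eigenvectorUnitary
  have hpow : ∀ k : ℕ, A ^ k = U * D ^ k * star U := by
    intro k
    induction k with
    | zero => simp [hUs]
    | succ k ih =>
      rw [pow_succ, ih, hA.spectral_theorem]
      rw [show (Unitary.conjStarAlgAut ℂ (Matrix n n ℂ) hA.eigenvectorUnitary)
          (diagonal (RCLike.ofReal ∘ hA.eigenvalues)) = U * D * star U from rfl]
      simp only [pow_succ, mul_assoc, ← mul_assoc (star U) U, hsU, one_mul]
  rw [hpow k, Matrix.trace_mul_cycle, hsU, one_mul]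
  simp [D, diagonal_pow, trace_diagonal]

set_option synthInstance.maxHeartbeats 1000000 in
set_option maxHeartbeats 1000000 in
/-- Auxiliary: eigenvalues of a Hermitian matrix are bounded by the operator norm. -/
lemma abs_eigenvalue_le_aux {n : Type*} [Fintype n] [DecidableEq n] {A : Matrix n n ℂ}
    (hA : A.IsHermitian) (i : n) : |hA.eigenvalues i| ≤ opNorm A := by
  have hx : ‖hA.eigenvectorBasis i‖ = 1 := hA.eigenvectorBasis.orthonormal.1 i
  have happ : (Matrix.toEuclideanLin A).toContinuousLinearMap (hA.eigenvectorBasis i)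
      = hA.eigenvalues i • hA.eigenvectorBasis i := by
    apply (WithLp.equiv 2 (n → ℂ)).injective
    simp only [LinearMap.coe_toContinuousLinearMap', Matrix.ofLp_toEuclideanLin_apply]
    have := hA.mulVec_eigenvectorBasis i
    simpa using this
  have hb := ContinuousLinearMap.le_opNorm
    (Matrix.toEuclideanLin A).toContinuousLinearMap (hA.eigenvectorBasis i)
  rw [happ, norm_smul, hx, mul_one, mul_one] at hb
  simpa [opNorm] using hb

/-- for any pure state `ψ` on `ℂ^{dA} ⊗ ℂ^{dB}`, with
`M = (R⊗I)(ψ) = I_A ⊗ Tr_A(ψ) − ψ`, one has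
`|Tr[M ψ M] − 1| ≤ 2 ‖Tr_A(ψ)‖_∞`. -/
theorem reduction_trace_bound {dA dB : ℕ}
    (v : Fin dA × Fin dB → ℂ) (hv : ∑ p, ‖v p‖ ^ 2 = 1)
    (ψ : Matrix (Fin dA × Fin dB) (Fin dA × Fin dB) ℂ)
    (hψ : ∀ p q, ψ p q = v p * star (v q))
    (τ : Matrix (Fin dB) (Fin dB) ℂ)
    (hτ : ∀ b b', τ b b' = ∑ a : Fin dA, ψ (a, b) (a, b'))
    (M : Matrix (Fin dA × Fin dB) (Fin dA × Fin dB) ℂ)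
    (hM : ∀ p q, M p q = (if p.1 = q.1 then τ p.2 q.2 else 0) - ψ p q) :
    ‖(M * ψ * M).trace - 1‖ ≤ 2 * opNorm τ := by
  classical
  -- basic normalization facts
  have hnorm1 : ∑ r : Fin dA × Fin dB, star (v r) * v r = (1 : ℂ) := by
    have : ∀ r : Fin dA × Fin dB, star (v r) * v r = ((‖v r‖ ^ 2 : ℝ) : ℂ) := by
      intro r
      rw [Complex.star_def, mul_comm, Complex.mul_conj, Complex.normSq_eq_norm_sq]
    rw [Finset.sum_congr rfl fun r _ => this r, ← Complex.ofReal_sum, hv, Complex.ofReal_one]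
  have hτ' : ∀ b b', τ b b' = ∑ a : Fin dA, v (a, b) * star (v (a, b')) := by
    intro b b'; rw [hτ]; exact Finset.sum_congr rfl fun a _ => hψ _ _
  -- ψ is idempotent with trace one
  have hψψ : ψ * ψ = ψ := by
    ext p q
    simp only [Matrix.mul_apply, hψ]
    calc ∑ r, v p * star (v r) * (v r * star (v q))
        = ∑ r, v p * star (v q) * (star (v r) * v r) := by
          exact Finset.sum_congr rfl fun r _ => by ring
      _ = v p * star (v q) := by rw [← Finset.mul_sum, hnorm1, mul_one]
  have htrψ : ψ.trace = 1 := by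
    simp only [Matrix.trace, Matrix.diag_apply, hψ]
    calc ∑ r : Fin dA × Fin dB, v r * star (v r)
        = ∑ r : Fin dA × Fin dB, star (v r) * v r :=
          Finset.sum_congr rfl fun r _ => mul_comm _ _
      _ = 1 := hnorm1
  -- τ is PSD
  have hPSD : τ.PosSemidef := by
    have hW : τ = (Matrix.of fun (a : Fin dA) (b : Fin dB) => star (v (a, b)))ᴴ *
        (Matrix.of fun (a : Fin dA) (b : Fin dB) => star (v (a, b))) := by
      ext b b'
      simp [Matrix.mul_apply, Matrix.conjTranspose_apply, hτ']
    rw [hW]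
    exact Matrix.posSemidef_conjTranspose_mul_self _
  have hHerm : τ.IsHermitian := hPSD.1
  -- the "I ⊗ B" construction
  set K : Matrix (Fin dB) (Fin dB) ℂ → Matrix (Fin dA × Fin dB) (Fin dA × Fin dB) ℂ :=
    fun B => Matrix.of fun p q => if p.1 = q.1 then B p.2 q.2 else 0 with hK
  have hKψ : ∀ B : Matrix (Fin dB) (Fin dB) ℂ, (K B * ψ).trace = (B * τ).trace := by
    intro B
    simp only [Matrix.trace, Matrix.diag_apply, Matrix.mul_apply, hK, Matrix.of_apply,
      Fintype.sum_prod_type, ite_mul, zero_mul, hψ, hτ']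
    calc ∑ a : Fin dA, ∑ b : Fin dB, ∑ a' : Fin dA, ∑ b' : Fin dB,
          (if a = a' then B b b' * (v (a', b') * star (v (a, b))) else 0)
        = ∑ a : Fin dA, ∑ b : Fin dB, ∑ b' : Fin dB, B b b' * (v (a, b') * star (v (a, b))) := by
          refine Finset.sum_congr rfl fun a _ => Finset.sum_congr rfl fun b _ => ?_
          rw [Finset.sum_comm]
          simp
      _ = ∑ b : Fin dB, ∑ a : Fin dA, ∑ b' : Fin dB, B b b' * (v (a, b') * star (v (a, b))) := by
          rw [Finset.sum_comm]
      _ = ∑ b : Fin dB, ∑ b' : Fin dB, B b b' * ∑ a : Fin dA, v (a, b') * star (v (a, b)) := by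
          refine Finset.sum_congr rfl fun b _ => ?_
          rw [Finset.sum_comm]
          exact Finset.sum_congr rfl fun b' _ => (Finset.mul_sum _ _ _).symm
  have hKK : K τ * K τ = K (τ * τ) := by
    ext p q
    rcases p with ⟨a, b⟩; rcases q with ⟨a', b'⟩
    simp only [Matrix.mul_apply, hK, Matrix.of_apply, Fintype.sum_prod_type, ite_mul, zero_mul,
      mul_ite, mul_zero]
    by_cases h : a = a' <;> simp [h, Finset.sum_ite_eq, Matrix.mul_apply]
  have hM' : M = K τ - ψ := by
    ext p q
    simp [hM, hK, Matrix.sub_apply]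
  -- the trace identity
  have htr : (M * ψ * M).trace = (τ ^ 3).trace - 2 * (τ ^ 2).trace + 1 := by
    have e1 : M * ψ = K τ * ψ - ψ := by rw [hM', Matrix.sub_mul, hψψ]
    have e2 : M * ψ * M = K τ * ψ * K τ - K τ * (ψ * ψ) - ψ * K τ + ψ * ψ := by
      rw [e1, hM']
      noncomm_ring
    rw [hψψ] at e2
    rw [e2, Matrix.trace_add, Matrix.trace_sub, Matrix.trace_sub, htrψ]
    have t1 : (K τ * ψ * K τ).trace = (τ ^ 3).trace := by
      rw [Matrix.trace_mul_cycle, hKK, hKψ]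
      rw [show τ * τ * τ = τ ^ 3 by rw [pow_succ, pow_two]]
    have t2 : (K τ * ψ).trace = (τ ^ 2).trace := by
      rw [hKψ, pow_two]
    have t3 : (ψ * K τ).trace = (τ ^ 2).trace := by
      rw [Matrix.trace_mul_comm, t2]
    rw [t1, t2, t3]
    ring
  -- eigenvalue facts
  set lam : Fin dB → ℝ := hHerm.eigenvalues with hlam
  have h3 : (τ ^ 3).trace = ((∑ i, lam i ^ 3 : ℝ) : ℂ) := trace_pow_eq_aux hHerm 3
  have h2 : (τ ^ 2).trace = ((∑ i, lam i ^ 2 : ℝ) : ℂ) := trace_pow_eq_aux hHerm 2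
  have h1 : ∑ i, lam i = 1 := by
    have hK1 : K 1 = 1 := by
      ext ⟨a, b⟩ ⟨a', b'⟩
      by_cases h : a = a' <;> by_cases h2 : b = b' <;>
        simp [hK, Matrix.one_apply, Prod.ext_iff, h, h2]
    have hτtr : τ.trace = 1 := by
      calc τ.trace = ((1 : Matrix (Fin dB) (Fin dB) ℂ) * τ).trace := by rw [Matrix.one_mul]
        _ = (K 1 * ψ).trace := (hKψ 1).symm
        _ = ψ.trace := by rw [hK1, Matrix.one_mul]
        _ = 1 := htrψ
    have hh := trace_pow_eq_aux hHerm 1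
    rw [pow_one, hτtr] at hh
    have : ((∑ i, lam i ^ 1 : ℝ) : ℂ) = ((1 : ℝ) : ℂ) := by rw [← hh]; norm_num
    have := Complex.ofReal_injective this
    simpa using this
  have hlam0 : ∀ i, 0 ≤ lam i := fun i => hPSD.eigenvalues_nonneg i
  have hlamL : ∀ i, lam i ≤ opNorm τ := fun i =>
    (le_abs_self _).trans (abs_eigenvalue_le_aux hHerm i)
  have hlam1 : ∀ i, lam i ≤ 1 := by
    intro i
    rw [← h1]
    exact Finset.single_le_sum (fun j _ => hlam0 j) (Finset.mem_univ i)
  have hL0 : (0 : ℝ) ≤ opNorm τ := by unfold opNorm; exact norm_nonneg _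
  -- assemble
  rw [htr, h3, h2]
  have : ((∑ i, lam i ^ 3 : ℝ) : ℂ) - 2 * ((∑ i, lam i ^ 2 : ℝ) : ℂ) + 1 - 1
      = (((∑ i, lam i ^ 3) - 2 * (∑ i, lam i ^ 2) : ℝ) : ℂ) := by push_cast; ring
  rw [this, Complex.norm_real, Real.norm_eq_abs]
  rw [abs_le]
  constructor
  · have hterm : ∀ i, 2 * lam i ^ 2 - lam i ^ 3 ≤ 2 * opNorm τ * lam i := by
      intro i
      nlinarith [hlam0 i, hlamL i, sq_nonneg (lam i)]
    have hsum : (∑ i, (2 * lam i ^ 2 - lam i ^ 3)) ≤ ∑ i, 2 * opNorm τ * lam i :=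
      Finset.sum_le_sum fun i _ => hterm i
    rw [Finset.sum_sub_distrib, ← Finset.mul_sum, ← Finset.mul_sum, h1, mul_one] at hsum
    linarith
  · have hterm : ∀ i, lam i ^ 3 - 2 * lam i ^ 2 ≤ 0 := by
      intro i
      nlinarith [hlam0 i, hlam1 i]
    have hsum : (∑ i, (lam i ^ 3 - 2 * lam i ^ 2)) ≤ 0 :=
      Finset.sum_nonpos fun i _ => hterm i
    rw [Finset.sum_sub_distrib, ← Finset.mul_sum] at hsum
    linarith
end

section
/- If E is an invertible completely positive trace-preserving map on M_d(C) that is not unitary conjugation, then its inverse E^{-1} is Hermitian-preserving and trace-preserving but not completely positive. -/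
open Matrix MeasureTheory
open scoped Kronecker ComplexOrder

/-- Ampliation `(id_l ⊗ N)(X)` of a linear map on matrices. -/
noncomputable def ampliate {d k : ℕ}
    (N : Matrix (Fin d) (Fin d) ℂ →ₗ[ℂ] Matrix (Fin k) (Fin k) ℂ) (l : ℕ)
    (X : Matrix (Fin l × Fin d) (Fin l × Fin d) ℂ) :
    Matrix (Fin l × Fin k) (Fin l × Fin k) ℂ :=
  fun p q => N (Matrix.of fun i j => X (p.1, i) (q.1, j)) p.2 q.2

/-- Complete positivity: every ampliation `id_l ⊗ N` maps positive semidefinite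
matrices to positive semidefinite matrices. -/
def IsCompletelyPositive {d k : ℕ}
    (N : Matrix (Fin d) (Fin d) ℂ →ₗ[ℂ] Matrix (Fin k) (Fin k) ℂ) : Prop :=
  ∀ (l : ℕ) (X : Matrix (Fin l × Fin d) (Fin l × Fin d) ℂ),
    X.PosSemidef → (ampliate N l X).PosSemidef

/- ### Auxiliary lemmas -/

private lemma sum_outer_rank_one {n κ : Type*} [Fintype n] [Fintype κ]
    (v : κ → n → ℂ) (w : n → ℂ) (hw : w ≠ 0)
    (H : ∀ p q, ∑ k, v k p * (starRingEnd ℂ) (v k q) = w p * (starRingEnd ℂ) (w q)) :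
    ∀ k, ∃ c : ℂ, v k = c • w := by
  classical
  set ip : (n → ℂ) → (n → ℂ) → ℂ := fun u x => ∑ p, (starRingEnd ℂ) (u p) * x p with hip
  have ip_conj : ∀ u x, (starRingEnd ℂ) (ip u x) = ip x u := by
    intro u x
    simp only [hip, map_sum]
    exact Finset.sum_congr rfl fun p _ => by
      rw [_root_.map_mul, Complex.conj_conj]; ring
  have ip_sub_left : ∀ u u' x, ip (u - u') x = ip u x - ip u' x := by
    intro u u' x
    simp [hip, sub_mul, Finset.sum_sub_distrib]
  have ip_sub_right : ∀ u x x', ip u (x - x') = ip u x - ip u x' := by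
    intro u x x'
    simp [hip, mul_sub, Finset.sum_sub_distrib]
  have ip_smul_left : ∀ (c : ℂ) u x, ip (c • u) x = (starRingEnd ℂ) c * ip u x := by
    intro c u x
    simp [hip, Finset.mul_sum, mul_assoc]
  have ip_smul_right : ∀ (c : ℂ) u x, ip u (c • x) = c * ip u x := by
    intro c u x
    simp only [hip, Pi.smul_apply, smul_eq_mul, Finset.mul_sum]
    exact Finset.sum_congr rfl fun p _ => by ring
  have ip_self : ∀ u, ip u u = ((∑ p, Complex.normSq (u p) : ℝ) : ℂ) := by
    intro u
    rw [hip]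
    push_cast
    exact Finset.sum_congr rfl fun p _ => (Complex.normSq_eq_conj_mul_self).symm
  have expand : ∀ (u x : n → ℂ), ip u x * (starRingEnd ℂ) (ip u x)
      = ∑ p, ∑ q, ((starRingEnd ℂ) (u p) * u q) * (x p * (starRingEnd ℂ) (x q)) := by
    intro u x
    rw [hip]
    simp only [map_sum, Finset.sum_mul_sum]
    exact Finset.sum_congr rfl fun p _ => Finset.sum_congr rfl fun q _ => by
      rw [_root_.map_mul, Complex.conj_conj]; ring
  have key : ∀ u, ∑ k, Complex.normSq (ip u (v k)) = Complex.normSq (ip u w) := by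
    intro u
    have hc : ∑ k, ip u (v k) * (starRingEnd ℂ) (ip u (v k))
        = ip u w * (starRingEnd ℂ) (ip u w) := by
      calc ∑ k, ip u (v k) * (starRingEnd ℂ) (ip u (v k))
          = ∑ k, ∑ p, ∑ q, ((starRingEnd ℂ) (u p) * u q) * (v k p * (starRingEnd ℂ) (v k q)) :=
            Finset.sum_congr rfl fun k _ => expand u (v k)
        _ = ∑ p, ∑ q, ((starRingEnd ℂ) (u p) * u q) * (∑ k, v k p * (starRingEnd ℂ) (v k q)) := by
            rw [Finset.sum_comm]
            refine Finset.sum_congr rfl fun p _ => ?_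
            rw [Finset.sum_comm]
            refine Finset.sum_congr rfl fun q _ => ?_
            rw [Finset.mul_sum]
        _ = ∑ p, ∑ q, ((starRingEnd ℂ) (u p) * u q) * (w p * (starRingEnd ℂ) (w q)) := by
            refine Finset.sum_congr rfl fun p _ => Finset.sum_congr rfl fun q _ => by rw [H]
        _ = ip u w * (starRingEnd ℂ) (ip u w) := (expand u w).symm
    simp only [Complex.mul_conj] at hc
    exact_mod_cast (by push_cast; exact hc :
      ((∑ k, Complex.normSq (ip u (v k)) : ℝ) : ℂ) = ((Complex.normSq (ip u w) : ℝ) : ℂ))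
  intro k
  have hww : ip w w ≠ 0 := by
    rw [ip_self]
    obtain ⟨p0, hp0⟩ : ∃ p, w p ≠ 0 := by
      by_contra hcon; push_neg at hcon; exact hw (funext hcon)
    have hpos : 0 < ∑ p, Complex.normSq (w p) :=
      Finset.sum_pos' (fun _ _ => Complex.normSq_nonneg _)
        ⟨p0, Finset.mem_univ _, Complex.normSq_pos.2 hp0⟩
    exact_mod_cast hpos.ne'
  set c : ℂ := ip w (v k) / ip w w with hcdef
  set u : n → ℂ := v k - c • w with hudef
  have h1 : ip u w = 0 := by
    rw [hudef, ip_sub_left, ip_smul_left]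
    have : (starRingEnd ℂ) c = ip (v k) w / ip w w := by
      rw [hcdef, map_div₀, ip_conj, ip_conj]
    rw [this, div_mul_cancel₀ _ hww, sub_self]
  have h2 : ip u (v k) = 0 := by
    have := key u
    rw [h1] at this
    simp only [Complex.normSq_zero] at this
    have hall := (Finset.sum_eq_zero_iff_of_nonneg
      (fun j _ => Complex.normSq_nonneg (ip u (v j)))).1 this k (Finset.mem_univ _)
    exact Complex.normSq_eq_zero.1 hall
  have h3 : ip u u = 0 := by
    rw [hudef, ip_sub_right, ip_smul_right, h2]
    rw [hudef] at h1
    rw [h1]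
    ring
  have hu0 : u = 0 := by
    rw [ip_self] at h3
    have hr : (∑ p, Complex.normSq (u p) : ℝ) = 0 := by exact_mod_cast h3
    funext p
    have := (Finset.sum_eq_zero_iff_of_nonneg
      (fun j _ => Complex.normSq_nonneg (u j))).1 hr p (Finset.mem_univ _)
    exact Complex.normSq_eq_zero.1 this
  exact ⟨c, by rw [← sub_eq_zero]; exact hu0⟩

private lemma choi_posSemidef {d : ℕ}
    (N : Matrix (Fin d) (Fin d) ℂ →ₗ[ℂ] Matrix (Fin d) (Fin d) ℂ)
    (h : IsCompletelyPositive N) : (choi N).PosSemidef := by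
  classical
  set Ω : Matrix (Fin d × Fin d) (Fin d × Fin d) ℂ :=
    Matrix.of fun p q => (if p.1 = p.2 then (1:ℂ) else 0) * (if q.1 = q.2 then (1:ℂ) else 0)
    with hΩ
  have hpsd : Ω.PosSemidef := by
    refine posSemidef_iff_dotProduct_mulVec.mpr ⟨?_, ?_⟩
    · ext p q
      simp only [hΩ, conjTranspose_apply, Matrix.of_apply, star_mul']
      split_ifs <;> simp
    · intro x
      have hd : dotProduct (star x) (Ω *ᵥ x)
          = (starRingEnd ℂ) (∑ q, (if q.1 = q.2 then (1:ℂ) else 0) * x q)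
            * (∑ q, (if q.1 = q.2 then (1:ℂ) else 0) * x q) := by
        rw [map_sum, Finset.sum_mul_sum]
        simp only [dotProduct, mulVec, hΩ, Matrix.of_apply, Pi.star_apply, Finset.mul_sum]
        refine Finset.sum_congr rfl fun p _ => Finset.sum_congr rfl fun q _ => ?_
        rw [_root_.map_mul]
        split_ifs <;> simp
      rw [hd, mul_comm, Complex.mul_conj]
      exact_mod_cast Complex.normSq_nonneg _
  have hamp : ampliate N d Ω = choi N := by
    ext p q
    show N (Matrix.of fun i j => Ω (p.1, i) (q.1, j)) p.2 q.2
        = N (Matrix.single p.1 q.1 1) p.2 q.2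
    have heq : (Matrix.of fun i j => Ω (p.1, i) (q.1, j)) = Matrix.single p.1 q.1 1 := by
      ext i j
      simp only [Matrix.of_apply, hΩ, Matrix.single]
      split_ifs with h1 h2 h3 <;> simp_all
    rw [heq]
  exact hamp ▸ h d Ω hpsd

private lemma kraus_of_choi {d : ℕ}
    (N : Matrix (Fin d) (Fin d) ℂ →ₗ[ℂ] Matrix (Fin d) (Fin d) ℂ)
    (h : (choi N).PosSemidef) :
    ∃ A : (Fin d × Fin d) → Matrix (Fin d) (Fin d) ℂ,
      ∀ X, N X = ∑ r, A r * X * (A r)ᴴ := by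
  classical
  obtain ⟨S0, hS0⟩ : ∃ B : Matrix (Fin d × Fin d) (Fin d × Fin d) ℂ, choi N = Bᴴ * B := by
    open scoped Matrix.Norms.L2Operator MatrixOrder in
    obtain ⟨B, hB⟩ := CStarAlgebra.nonneg_iff_eq_star_mul_self.mp h.nonneg
    exact ⟨B, hB⟩
  set S := S0ᴴ with hSdef
  have hSS : ∀ p q, choi N p q = ∑ r, S p r * star (S q r) := by
    intro p q
    rw [hS0, Matrix.mul_apply]
    simp [hSdef, Matrix.conjTranspose_apply]
  refine ⟨fun r => Matrix.of fun a i => S (i, a) r, fun X => ?_⟩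
  have hX : N X = ∑ i, ∑ j, X i j • N (Matrix.single i j 1) := by
    conv_lhs => rw [matrix_eq_sum_single X]
    rw [map_sum]
    refine Finset.sum_congr rfl fun i _ => ?_
    rw [map_sum]
    refine Finset.sum_congr rfl fun j _ => ?_
    have h1 : Matrix.single i j (X i j) = X i j • Matrix.single i j 1 := by
      ext a b
      simp [Matrix.single]
    rw [h1, _root_.map_smul]
  ext a b
  rw [hX]
  have lhs : (∑ i, ∑ j, X i j • N (Matrix.single i j 1)) a b
      = ∑ i, ∑ j, ∑ r, X i j * (S (i, a) r * star (S (j, b) r)) := by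
    rw [Matrix.sum_apply]
    refine Finset.sum_congr rfl fun i _ => ?_
    rw [Matrix.sum_apply]
    refine Finset.sum_congr rfl fun j _ => ?_
    have h2 : N (Matrix.single i j 1) a b = choi N (i, a) (j, b) := rfl
    rw [Matrix.smul_apply, h2, hSS, smul_eq_mul, Finset.mul_sum]
  have rhs : (∑ r, (fun r => Matrix.of fun a i => S (i, a) r) r * X
        * ((fun r => Matrix.of fun a i => S (i, a) r) r)ᴴ) a b
      = ∑ r : Fin d × Fin d, ∑ j, (∑ i, S (i, a) r * X i j) * star (S (j, b) r) := by
    rw [Matrix.sum_apply]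
    refine Finset.sum_congr rfl fun r _ => ?_
    rw [Matrix.mul_apply]
    refine Finset.sum_congr rfl fun j _ => ?_
    rw [Matrix.mul_apply, Matrix.conjTranspose_apply]
    rfl
  rw [lhs, rhs]
  calc ∑ i, ∑ j, ∑ r : Fin d × Fin d, X i j * (S (i, a) r * star (S (j, b) r))
      = ∑ i, ∑ r : Fin d × Fin d, ∑ j, X i j * (S (i, a) r * star (S (j, b) r)) :=
        Finset.sum_congr rfl fun i _ => Finset.sum_comm
    _ = ∑ r : Fin d × Fin d, ∑ i, ∑ j, X i j * (S (i, a) r * star (S (j, b) r)) :=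
        Finset.sum_comm
    _ = ∑ r : Fin d × Fin d, ∑ j, ∑ i, X i j * (S (i, a) r * star (S (j, b) r)) :=
        Finset.sum_congr rfl fun r _ => Finset.sum_comm
    _ = ∑ r : Fin d × Fin d, ∑ j, (∑ i, S (i, a) r * X i j) * star (S (j, b) r) := by
        refine Finset.sum_congr rfl fun r _ => Finset.sum_congr rfl fun j _ => ?_
        rw [Finset.sum_mul]
        exact Finset.sum_congr rfl fun i _ => by ring

private lemma sandwich_std {d : ℕ} (C : Matrix (Fin d) (Fin d) ℂ) (i j a b : Fin d) :
    (C * Matrix.single i j 1 * Cᴴ : Matrix (Fin d) (Fin d) ℂ) a b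
      = C a i * star (C b j) := by
  rw [Matrix.mul_apply]
  have h1 : ∀ y, (C * Matrix.single i j 1 : Matrix (Fin d) (Fin d) ℂ) a y
      = if j = y then C a i else 0 := by
    intro y
    rw [Matrix.mul_apply]
    simp [Matrix.single, ite_and, Finset.sum_ite_eq, mul_ite]
  simp [h1, Matrix.conjTranspose_apply, ite_mul, Finset.sum_ite_eq]

/-- the inverse of an invertible CPTP map that is not a unitary
conjugation is Hermitian-preserving and trace-preserving, but not completely
positive. -/
theorem inverse_of_CPTP_not_CP {d : ℕ}
    (E Einv : Matrix (Fin d) (Fin d) ℂ →ₗ[ℂ] Matrix (Fin d) (Fin d) ℂ)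
    (hCP : IsCompletelyPositive E) (hTP : ∀ X, (E X).trace = X.trace)
    (hinv1 : Einv.comp E = LinearMap.id) (hinv2 : E.comp Einv = LinearMap.id)
    (hnotU : ¬ ∃ U : Matrix (Fin d) (Fin d) ℂ,
        U ∈ Matrix.unitaryGroup (Fin d) ℂ ∧ ∀ X, E X = U * X * Uᴴ) :
    (∀ X, Einv Xᴴ = (Einv X)ᴴ) ∧ (∀ X, (Einv X).trace = X.trace) ∧
      ¬ IsCompletelyPositive Einv := by
  classical
  rcases Nat.eq_zero_or_pos d with hd | hd
  · -- degenerate case: `hnotU` is contradictory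
    exfalso
    subst hd
    refine hnotU ⟨1, ?_, fun X => ?_⟩
    · rw [Matrix.mem_unitaryGroup_iff]; simp
    · ext i j; exact i.elim0
  -- the real case
  have hinv1' : ∀ X, Einv (E X) = X := fun X => LinearMap.congr_fun hinv1 X
  have hinv2' : ∀ X, E (Einv X) = X := fun X => LinearMap.congr_fun hinv2 X
  obtain ⟨A, hA⟩ := kraus_of_choi E (choi_posSemidef E hCP)
  have hEH : ∀ Y, E Yᴴ = (E Y)ᴴ := by
    intro Y
    rw [hA, hA, Matrix.conjTranspose_sum]
    refine Finset.sum_congr rfl fun r _ => ?_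
    simp [Matrix.conjTranspose_mul, Matrix.mul_assoc]
  have HP : ∀ X, Einv Xᴴ = (Einv X)ᴴ := by
    intro X
    conv_lhs => rw [← hinv2' X]
    rw [← hEH, hinv1']
  have TP' : ∀ X, (Einv X).trace = X.trace := by
    intro X
    conv_rhs => rw [← hinv2' X]
    rw [hTP]
  refine ⟨HP, TP', ?_⟩
  intro hCPinv
  obtain ⟨B, hB⟩ := kraus_of_choi Einv (choi_posSemidef Einv hCPinv)
  set C : (Fin d × Fin d) × (Fin d × Fin d) → Matrix (Fin d) (Fin d) ℂ :=
    fun k => B k.1 * A k.2 with hCdef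
  have hcomp : ∀ X : Matrix (Fin d) (Fin d) ℂ, ∑ k, C k * X * (C k)ᴴ = X := by
    intro X
    have h0 : Einv (E X) = X := hinv1' X
    rw [hA, hB] at h0
    conv_rhs => rw [← h0]
    rw [Fintype.sum_prod_type]
    refine Finset.sum_congr rfl fun s _ => ?_
    rw [Finset.mul_sum, Finset.sum_mul]
    refine Finset.sum_congr rfl fun r _ => ?_
    rw [hCdef]
    simp only [Matrix.conjTranspose_mul, Matrix.mul_assoc]
  -- each C k is a scalar multiple of the identity
  set v : ((Fin d × Fin d) × (Fin d × Fin d)) → (Fin d × Fin d) → ℂ :=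
    fun k p => C k p.2 p.1 with hvdef
  set w : (Fin d × Fin d) → ℂ := fun p => if p.1 = p.2 then 1 else 0 with hwdef
  have i0 : Fin d := ⟨0, hd⟩
  have hw : w ≠ 0 := by
    intro hcon
    have := congrFun hcon (i0, i0)
    simp [hwdef] at this
  have H : ∀ p q, ∑ k, v k p * (starRingEnd ℂ) (v k q) = w p * (starRingEnd ℂ) (w q) := by
    rintro ⟨i, a⟩ ⟨j, b⟩
    have h0 := hcomp (Matrix.single i j 1)
    have h1 := congrFun (congrFun h0 a) b
    rw [Matrix.sum_apply] at h1
    have h2 : ∑ k, C k a i * star (C k b j) = Matrix.single i j 1 a b := by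
      rw [← h1]
      exact Finset.sum_congr rfl fun k _ => (sandwich_std (C k) i j a b).symm
    show ∑ k, C k a i * (starRingEnd ℂ) (C k b j)
        = w (i, a) * (starRingEnd ℂ) (w (j, b))
    have h3 : ∑ k, C k a i * (starRingEnd ℂ) (C k b j)
        = ∑ k, C k a i * star (C k b j) := rfl
    rw [h3, h2]
    simp only [hwdef, Matrix.single, Matrix.of_apply]
    split_ifs <;> simp_all
  obtain hsc := sum_outer_rank_one v w hw H
  choose c hc using hsc
  have hCk : ∀ k, C k = c k • (1 : Matrix (Fin d) (Fin d) ℂ) := by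
    intro k
    ext a i
    have := congrFun (hc k) (i, a)
    rw [hvdef] at this
    simp only [Pi.smul_apply, smul_eq_mul, hwdef] at this
    rw [Matrix.smul_apply, Matrix.one_apply, this, smul_eq_mul]
    rcases eq_or_ne i a with h | h
    · subst h; simp
    · simp [h, Ne.symm h]
  -- some c k is nonzero
  have hsum1 : (∑ k, c k * star (c k)) = 1 := by
    have h0 := hcomp 1
    have h1 : ∑ k, C k * (1 : Matrix (Fin d) (Fin d) ℂ) * (C k)ᴴ
        = (∑ k, c k * star (c k)) • (1 : Matrix (Fin d) (Fin d) ℂ) := by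
      rw [Finset.sum_smul]
      refine Finset.sum_congr rfl fun k _ => ?_
      rw [hCk k, Matrix.mul_one, Matrix.conjTranspose_smul, Matrix.conjTranspose_one,
        Matrix.smul_mul, Matrix.mul_smul, smul_smul, Matrix.mul_one]
    rw [h1] at h0
    have h2 := congrFun (congrFun h0 i0) i0
    rw [Matrix.smul_apply, Matrix.one_apply_eq, smul_eq_mul, mul_one] at h2
    exact h2
  have hex : ∃ k, c k ≠ 0 := by
    by_contra hcon
    push_neg at hcon
    rw [Finset.sum_eq_zero (fun k _ => by rw [hcon k]; simp)] at hsum1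
    exact one_ne_zero hsum1.symm
  obtain ⟨⟨s0, r0⟩, hc0⟩ := hex
  set c0 : ℂ := c (s0, r0) with hc0def
  have hBA0 : B s0 * A r0 = c0 • 1 := hCk (s0, r0)
  have hleft : (c0⁻¹ • B s0) * A r0 = 1 := by
    rw [Matrix.smul_mul, hBA0, smul_smul, inv_mul_cancel₀ hc0, one_smul]
  have hright : A r0 * (c0⁻¹ • B s0) = 1 := mul_eq_one_comm.1 hleft
  set t : Fin d × Fin d → ℂ := fun r => c0⁻¹ * c (s0, r) with htdef
  have hAr : ∀ r, A r = t r • A r0 := by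
    intro r
    calc A r = (A r0 * (c0⁻¹ • B s0)) * A r := by rw [hright, one_mul]
      _ = A r0 * ((c0⁻¹ • B s0) * A r) := Matrix.mul_assoc _ _ _
      _ = A r0 * (c0⁻¹ • (c (s0, r) • 1)) := by
          rw [Matrix.smul_mul, show B s0 * A r = c (s0, r) • 1 from hCk (s0, r)]
      _ = t r • A r0 := by
          rw [smul_smul, Matrix.mul_smul, mul_one, htdef]
  have ht0 : t r0 = 1 := by rw [htdef]; exact inv_mul_cancel₀ hc0
  set τ : ℝ := ∑ r, Complex.normSq (t r) with hτdef
  have hτ1 : 1 ≤ τ := by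
    rw [hτdef]
    have : Complex.normSq (t r0) = 1 := by rw [ht0]; simp
    rw [← this]
    exact Finset.single_le_sum (fun r _ => Complex.normSq_nonneg (t r)) (Finset.mem_univ r0)
  have hτpos : (0:ℝ) < τ := lt_of_lt_of_le one_pos hτ1
  set U : Matrix (Fin d) (Fin d) ℂ := ((Real.sqrt τ : ℝ) : ℂ) • A r0 with hUdef
  have hUX : ∀ X, E X = U * X * Uᴴ := by
    intro X
    rw [hA]
    have step1 : ∀ r, A r * X * (A r)ᴴ = (t r * star (t r)) • (A r0 * X * (A r0)ᴴ) := by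
      intro r
      rw [hAr r]
      rw [Matrix.conjTranspose_smul, Matrix.smul_mul, Matrix.smul_mul, Matrix.mul_smul,
        smul_smul]
    calc ∑ r, A r * X * (A r)ᴴ
        = ∑ r, (t r * star (t r)) • (A r0 * X * (A r0)ᴴ) :=
          Finset.sum_congr rfl fun r _ => step1 r
      _ = (∑ r, t r * star (t r)) • (A r0 * X * (A r0)ᴴ) := (Finset.sum_smul).symm
      _ = ((τ : ℝ) : ℂ) • (A r0 * X * (A r0)ᴴ) := by
          congr 1
          rw [hτdef]
          push_cast
          refine Finset.sum_congr rfl fun r _ => ?_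
          exact Complex.mul_conj (t r)
      _ = U * X * Uᴴ := by
          rw [hUdef, Matrix.conjTranspose_smul, Matrix.smul_mul, Matrix.smul_mul,
            Matrix.mul_smul, smul_smul]
          congr 1
          have hst : star (((Real.sqrt τ : ℝ) : ℂ)) = ((Real.sqrt τ : ℝ) : ℂ) := by
            rw [Complex.star_def, Complex.conj_ofReal]
          rw [hst, ← Complex.ofReal_mul, Real.mul_self_sqrt hτpos.le]
  have hUnit : U ∈ Matrix.unitaryGroup (Fin d) ℂ := by
    rw [Matrix.mem_unitaryGroup_iff']
    have hUU : Uᴴ * U = 1 := by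
      ext i j
      have htr := hTP (Matrix.single j i 1)
      rw [hUX] at htr
      have htr1 : (U * Matrix.single j i 1 * Uᴴ).trace
          = ∑ a, U a j * star (U a i) := by
        rw [Matrix.trace]
        exact Finset.sum_congr rfl fun a _ => sandwich_std U j i a a
      have htr2 : (Matrix.single j i 1 : Matrix (Fin d) (Fin d) ℂ).trace
          = if i = j then 1 else 0 := by
        rw [Matrix.trace]
        simp [Matrix.diag, Matrix.single, ite_and, Finset.sum_ite_eq]
      rw [htr1, htr2] at htr
      rw [Matrix.mul_apply, Matrix.one_apply]
      calc ∑ a, Uᴴ i a * U a j = ∑ a, U a j * star (U a i) := by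
            refine Finset.sum_congr rfl fun a _ => ?_
            rw [Matrix.conjTranspose_apply]; ring
        _ = if i = j then 1 else 0 := htr
    rw [Matrix.star_eq_conjTranspose]
    exact hUU
  exact hnotU ⟨U, hUnit, hUX⟩
end
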